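/- For every well-formed in-place state s (N even, N ≥ 2, ℓ ≥ Nat.clog 2 N, all entries of A and initv strictly less than 2^ℓ, 2·b ≤ N), every position i : Fin N and every value v < 2^ℓ, the state s' = iwrite(s, i, v) is again well-formed and Zabs s' = Function.update (Zabs s) i v. (This is the core invariant-maintenance claim of the in-place algorithm using 2ℓ extra bits: the write operation of Algorithm 3 implements writing one element of the abstract array.) -/

import Mathlib

/-- A state of the in-place initializable-array algorithm: the single backing array `A`
of length `N`, a stack pointer `b`, and an initial value `initv`. -/
structure IPState (N : ℕ) where
  A : Fin N → ℕ
  b : ℕ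
  initv : ℕ

namespace IPState

variable {N : ℕ}

/-- Read the backing array at a natural-number position (out-of-range reads return `0`;
all positions actually used by the algorithm are in range). -/
def get (s : IPState N) (x : ℕ) : ℕ :=
  if h : x < N then s.A ⟨x, h⟩ else 0

/-- Write value `v` at natural-number position `x` of the backing array. -/
def set (s : IPState N) (x v : ℕ) : IPState N :=
  { s with A := fun y => if (y : ℕ) = x then v else s.A y }

/-- `chainWith s i` returns `some k` if block `B_i` is chained with block `B_k`
(i.e. `A[2i] = 2k`, `A[2k] = 2i`, the two blocks lie on opposite sides of the
stack pointer `b`, and both block indices are valid), and `none` otherwise. -/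
def chainWith (s : IPState N) (i : ℕ) : Option ℕ :=
  let k' := s.get (2 * i)
  let k := k' / 2
  if k' % 2 = 0 ∧ s.get k' = 2 * i ∧
      (i < s.b ∧ s.b ≤ k ∨ k < s.b ∧ s.b ≤ i) ∧
      2 * i + 1 < N ∧ 2 * k + 1 < N then
    some k
  else
    none

/-- `makeChain s i j` chains block `B_i` with block `B_j`: `A[2i] ← 2j`, `A[2j] ← 2i`. -/
def makeChain (s : IPState N) (i j : ℕ) : IPState N :=
  (s.set (2 * i) (2 * j)).set (2 * j) (2 * i)

/-- `breakChain s i` breaks the chain of block `B_i` (if any) by rewriting `A[2k] ← 2k`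
for the partner block `B_k`. -/
def breakChain (s : IPState N) (i : ℕ) : IPState N :=
  match s.chainWith i with
  | some k => s.set (2 * k) (2 * k)
  | none => s

/-- `initBlock s i` initializes block `B_i` with the initial value:
`A[2i] ← initv`, `A[2i+1] ← initv`. -/
def initBlock (s : IPState N) (i : ℕ) : IPState N :=
  (s.set (2 * i) s.initv).set (2 * i + 1) s.initv

/-- `extend` extends the written area by one block and returns (the new state and the
index of) a block initialized with `(initv, initv)` lying in the written area. -/
def extend (s : IPState N) : IPState N × ℕ :=
  match s.chainWith s.b with
  | none =>
      let s1 : IPState N := { s with b := s.b + 1 }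
      ((s1.initBlock s.b).breakChain s.b, s.b)
  | some k =>
      let s1 : IPState N := { s with b := s.b + 1 }
      -- overwrite block `B_{b-1}` with its abstract values, keeping `A[2(b-1)+1]`
      let s2 := s1.set (2 * s.b) (s1.get (2 * k + 1))
      let s3 := s2.breakChain s.b
      ((s3.initBlock k).breakChain k, k)

/-- The abstraction: the contents of the abstract initializable array represented by
the in-place state. -/
def Zabs (s : IPState N) (x : Fin N) : ℕ :=
  let i := (x : ℕ) / 2
  match s.chainWith i with
  | some k =>
      if i < s.b then s.initv
      else if (x : ℕ) % 2 = 0 then s.get (2 * k + 1) else s.A x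
  | none =>
      if i < s.b then s.A x else s.initv

/-- Step (W): write `v` at position `i` and break any accidental chain of its block. -/
def wstep (s : IPState N) (i : Fin N) (v : ℕ) : IPState N :=
  (s.set (i : ℕ) v).breakChain ((i : ℕ) / 2)

/-- Step (U): for a position `i` in a block chained with `B_k` in the unwritten area,
write `v` at the corresponding stored position. -/
def ustep (s : IPState N) (i : Fin N) (v k : ℕ) : IPState N :=
  if (i : ℕ) % 2 = 0 then s.set (2 * k + 1) v else s.set (i : ℕ) v

/-- The write operation of the in-place algorithm (Algorithm 3). -/
def iwrite (s : IPState N) (i : Fin N) (v : ℕ) : IPState N :=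
  let i' := (i : ℕ) / 2
  if i' < s.b then
    match s.chainWith i' with
    | none => s.wstep i v
    | some k =>
        let p := s.extend
        let s1 := p.1
        let j := p.2
        if j = i' then s1.wstep i v
        else
          -- exchange `B_{i'}` with `B_j`
          let s2 := (s1.set (2 * j) (s1.get (2 * i'))).set (2 * j + 1) (s1.get (2 * i' + 1))
          let s3 := s2.makeChain j k
          let s4 := s3.initBlock i'
          s4.wstep i v
  else
    match s.chainWith i' with
    | some k => s.ustep i v k
    | none =>
        let p := s.extend
        let s1 := p.1
        let k := p.2
        if k = i' then s1.wstep i v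
        else
          let s2 := s1.initBlock i'
          let s3 := s2.makeChain k i'
          s3.ustep i v k

/-- The read operation of the in-place algorithm (Algorithm 2). -/
def iread (s : IPState N) (i : Fin N) : ℕ :=
  let i' := (i : ℕ) / 2
  if (i : ℕ) < 2 * s.b then
    match s.chainWith i' with
    | some _ => s.initv
    | none => s.A i
  else
    match s.chainWith i' with
    | some _ => if (i : ℕ) % 2 = 0 then s.get (s.A i + 1) else s.A i
    | none => s.initv

/-- The init operation of the in-place algorithm: set `b ← 0` and `initv ← v`,
leaving `A` unchanged. -/
def iinit (s : IPState N) (v : ℕ) : IPState N :=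
  { s with b := 0, initv := v }

/-- Well-formedness of an in-place state with element size `ℓ`: all entries of `A`
and the initial value are `ℓ`-bit values, and the written area fits in the array. -/
def WF (ℓ : ℕ) (s : IPState N) : Prop :=
  (∀ x : Fin N, s.A x < 2 ^ ℓ) ∧ s.initv < 2 ^ ℓ ∧ 2 * s.b ≤ N

end IPState
namespace IPState

variable {N : ℕ}

@[simp] lemma set_b (s : IPState N) (x v : ℕ) : (s.set x v).b = s.b := rfl
@[simp] lemma set_initv (s : IPState N) (x v : ℕ) : (s.set x v).initv = s.initv := rfl

lemma get_set (s : IPState N) (x v y : ℕ) :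
    (s.set x v).get y = if y = x ∧ y < N then v else s.get y := by
  unfold get set
  by_cases h2 : y = x
  · subst h2; by_cases h : y < N <;> simp [h]
  · by_cases h : y < N <;> simp [h, h2]

lemma A_eq_get (s : IPState N) (x : Fin N) : s.A x = s.get x := by
  simp [get]

lemma get_lt {s : IPState N} {ℓ : ℕ} (hs : ∀ x : Fin N, s.A x < 2 ^ ℓ) (y : ℕ) :
    s.get y < 2 ^ ℓ := by
  unfold get; split
  · exact hs _
  · exact Nat.pow_pos (by norm_num)

lemma chainWith_eq_some_iff {s : IPState N} {i k : ℕ} :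
    s.chainWith i = some k ↔
      s.get (2*i) = 2*k ∧ s.get (2*k) = 2*i ∧
      (i < s.b ∧ s.b ≤ k ∨ k < s.b ∧ s.b ≤ i) ∧ 2*i+1 < N ∧ 2*k+1 < N := by
  unfold chainWith
  dsimp only
  split_ifs with h
  · simp only [Option.some.injEq]
    constructor
    · rintro rfl
      obtain ⟨he, hb, hsides, h1, h2⟩ := h
      have : s.get (2*i) = 2 * (s.get (2*i) / 2) := by omega
      exact ⟨this, by rw [← this]; exact hb, hsides, h1, h2⟩
    · rintro ⟨h1, -⟩; omega
  · simp only [false_iff]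
    rintro ⟨h1, h2, h3, h4, h5⟩
    exact h ⟨by omega, by rw [h1]; exact h2, by rw [h1]; simpa using h3, h4, by rw [h1]; simpa using h5⟩

lemma chainWith_eq_none_iff {s : IPState N} {i : ℕ} :
    s.chainWith i = none ↔
      ∀ k, ¬(s.get (2*i) = 2*k ∧ s.get (2*k) = 2*i ∧
      (i < s.b ∧ s.b ≤ k ∨ k < s.b ∧ s.b ≤ i) ∧ 2*i+1 < N ∧ 2*k+1 < N) := by
  rw [Option.eq_none_iff_forall_not_mem]
  simp only [Option.mem_def]
  exact forall_congr' fun k => not_congr chainWith_eq_some_iff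

lemma chainWith_congr {s t : IPState N} {i : ℕ} (hb : t.b = s.b)
    (h1 : t.get (2*i) = s.get (2*i)) (h2 : t.get (s.get (2*i)) = s.get (s.get (2*i))) :
    t.chainWith i = s.chainWith i := by
  unfold chainWith
  dsimp only
  rw [h1, h2, hb]

lemma breakChain_of_some {s : IPState N} {i k : ℕ} (h : s.chainWith i = some k) :
    s.breakChain i = s.set (2*k) (2*k) := by
  unfold breakChain; rw [h]

lemma breakChain_of_none {s : IPState N} {i : ℕ} (h : s.chainWith i = none) :
    s.breakChain i = s := by
  unfold breakChain; rw [h]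

lemma Zabs_of_some {s : IPState N} {x : Fin N} {k : ℕ} (h : s.chainWith ((x:ℕ)/2) = some k) :
    s.Zabs x = if (x:ℕ)/2 < s.b then s.initv
      else if (x:ℕ) % 2 = 0 then s.get (2*k+1) else s.get x := by
  unfold Zabs; dsimp only; rw [h, A_eq_get]

lemma Zabs_of_none {s : IPState N} {x : Fin N} (h : s.chainWith ((x:ℕ)/2) = none) :
    s.Zabs x = if (x:ℕ)/2 < s.b then s.get x else s.initv := by
  unfold Zabs; dsimp only; rw [h, A_eq_get]

end IPState
namespace IPState
variable {N : ℕ}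

lemma chainWith_symm {s : IPState N} {c d : ℕ} (h : s.chainWith c = some d) :
    s.chainWith d = some c := by
  rw [chainWith_eq_some_iff] at h ⊢
  obtain ⟨h1, h2, h3, h4, h5⟩ := h
  exact ⟨h2, h1, by omega, h5, h4⟩

lemma chainWith_congr2 {s t : IPState N} {c : ℕ} (hb : t.b = s.b)
    (h1 : t.get (2*c) = s.get (2*c))
    (h2 : s.get (2*c) % 2 = 0 → t.get (s.get (2*c)) = s.get (s.get (2*c))) :
    t.chainWith c = s.chainWith c := by
  unfold chainWith; dsimp only; rw [h1, hb]
  by_cases he : s.get (2*c) % 2 = 0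
  · rw [h2 he]
  · simp [he]

lemma ustep_correct {s : IPState N} {i : Fin N} {v k0 : ℕ}
    (hch : s.chainWith ((i:ℕ)/2) = some k0) (hge : s.b ≤ (i:ℕ)/2) :
    (s.ustep i v k0).Zabs = Function.update s.Zabs i v := by
  obtain ⟨e1, e2, hside, r1, r2⟩ := chainWith_eq_some_iff.mp hch
  have hk0 : k0 < s.b ∧ s.b ≤ (i:ℕ)/2 := by omega
  -- the written position is odd in both cases
  set w : ℕ := if (i:ℕ) % 2 = 0 then 2*k0+1 else (i:ℕ) with hw
  have hust : s.ustep i v k0 = s.set w v := by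
    unfold ustep; rw [hw]; split_ifs <;> rfl
  have hwodd : w % 2 = 1 := by rw [hw]; split_ifs with h <;> omega
  have hgw : ∀ y, (s.set w v).get y = if y = w ∧ y < N then v else s.get y :=
    fun y => get_set ..
  have hC : ∀ c, (s.set w v).chainWith c = s.chainWith c := by
    intro c
    refine chainWith_congr2 rfl ?_ fun he => ?_
    · rw [hgw]; rw [if_neg (by omega)]
    · rw [hgw]; rw [if_neg (by omega)]
  rw [hust]
  funext x
  rw [Function.update_apply]
  by_cases hxi : x = i
  · subst hxi
    rw [if_pos rfl, Zabs_of_some (by rw [hC]; exact hch)]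
    rw [set_b, set_initv]
    rw [if_neg (not_lt.mpr hge)]
    split_ifs with hpar
    · rw [hgw, if_pos ⟨by simp [hw, hpar], r2⟩]
    · rw [hgw, if_pos ⟨by simp [hw, hpar], x.isLt⟩]
  · rw [if_neg hxi]
    have hxi' : (x:ℕ) ≠ (i:ℕ) := fun h => hxi (Fin.ext h)
    have hsymm : s.chainWith k0 = some ((i:ℕ)/2) := chainWith_symm hch
    rcases hc : s.chainWith ((x:ℕ)/2) with _ | d
    · rw [Zabs_of_none (by rw [hC]; exact hc), Zabs_of_none hc]
      rw [set_b, set_initv]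
      split_ifs with hlt
      · -- need x ≠ w
        rw [hgw, if_neg ?_]
        rintro ⟨hxw, -⟩
        rw [hw] at hxw
        split_ifs at hxw with hpar
        · -- x = 2*k0+1 so x/2 = k0, but block k0 is chained: contradiction
          rw [hxw] at hc; rw [(by omega : (2*k0+1)/2 = k0)] at hc
          rw [hsymm] at hc; exact nomatch hc
        · exact hxi' hxw
      · rfl
    · rw [Zabs_of_some (by rw [hC]; exact hc), Zabs_of_some hc]
      rw [set_b, set_initv]
      split_ifs with hlt hpar
      · rfl
      · -- x even, unwritten chained block: value from partner's odd slot
        rw [hgw, if_neg ?_]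
        rintro ⟨hxw, -⟩
        rw [hw] at hxw
        obtain ⟨f1, f2, fside, fr1, fr2⟩ := chainWith_eq_some_iff.mp hc
        split_ifs at hxw with hie
        · -- 2d+1 = 2k0+1 → d = k0; then x/2 chained with k0 and i/2 chained with k0
          have hdk : d = k0 := by omega
          subst hdk
          have := chainWith_symm hc
          rw [hsymm] at this
          have : (x:ℕ)/2 = (i:ℕ)/2 := by
            have := Option.some.inj this; omega
          omega
        · -- 2d+1 = i with i odd → d = i/2; then i/2 chained with x/2, but also with k0
          have hdi : d = (i:ℕ)/2 := by omega
          subst hdi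
          have := chainWith_symm hc
          rw [hch] at this
          have : k0 = (x:ℕ)/2 := Option.some.inj this
          omega
      · rw [hgw, if_neg ?_]
        rintro ⟨hxw, -⟩
        rw [hw] at hxw
        split_ifs at hxw with hie
        · -- x odd equals 2k0+1 → x/2 = k0 < b, contradiction with ¬(x/2 < b)
          omega
        · exact hxi' hxw
lemma chainWith_eq_none_of {s : IPState N} {c : ℕ}
    (h : ∀ k, s.get (2*c) = 2*k → s.get (2*k) = 2*c →
      (c < s.b ∧ s.b ≤ k ∨ k < s.b ∧ s.b ≤ c) → 2*c+1 < N → 2*k+1 < N → False) :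
    s.chainWith c = none := by
  rw [chainWith_eq_none_iff]
  rintro k ⟨h1, h2, h3, h4, h5⟩
  exact h k h1 h2 h3 h4 h5

/-- Master lemma: if all chain statuses are preserved, the written position `i` lies in
an unchained written block, and all other relevant values are preserved, then the
abstraction is updated at `i`. -/
lemma Zabs_update_of {s t : IPState N} (i : Fin N) (v : ℕ)
    (hb : t.b = s.b) (hiv : t.initv = s.initv)
    (hC : ∀ c, t.chainWith c = s.chainWith c)
    (hlt : (i:ℕ)/2 < s.b) (hchN : s.chainWith ((i:ℕ)/2) = none)
    (hgeti : t.get i = v)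
    (hsame : ∀ y : Fin N, (y:ℕ) ≠ (i:ℕ) → (y:ℕ)/2 < s.b → t.get y = s.get y)
    (hsame2 : ∀ y : Fin N, (y:ℕ) % 2 = 1 → s.b ≤ (y:ℕ)/2 → t.get y = s.get y) :
    t.Zabs = Function.update s.Zabs i v := by
  funext x
  rw [Function.update_apply]
  by_cases hxi : x = i
  · subst hxi
    rw [if_pos rfl, Zabs_of_none (by rw [hC]; exact hchN), if_pos (by omega), hgeti]
  · rw [if_neg hxi]
    have hxi' : (x:ℕ) ≠ (i:ℕ) := fun h => hxi (Fin.ext h)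
    rcases hc : s.chainWith ((x:ℕ)/2) with _ | d
    · rw [Zabs_of_none (by rw [hC]; exact hc), Zabs_of_none hc, hb, hiv]
      split_ifs with h1
      · exact hsame x hxi' h1
      · rfl
    · obtain ⟨e1, e2, eside, er1, er2⟩ := chainWith_eq_some_iff.mp hc
      rw [Zabs_of_some (by rw [hC]; exact hc), Zabs_of_some hc, hb, hiv]
      split_ifs with h1 h2
      · rfl
      · -- unwritten chained block, even position: partner's odd slot
        have hd : d < s.b := by omega
        refine hsame ⟨2*d+1, er2⟩ ?_ (by simp; omega)
        simp only
        intro hdi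
        have : (i:ℕ)/2 = d := by omega
        rw [this, chainWith_symm hc] at hchN
        exact nomatch hchN
      · exact hsame2 x (by omega) (by omega)

lemma wstep_correct {s : IPState N} {i : Fin N} {v : ℕ}
    (hch : s.chainWith ((i:ℕ)/2) = none) (hlt : (i:ℕ)/2 < s.b) :
    (s.wstep i v).Zabs = Function.update s.Zabs i v := by
  have hiN : (i:ℕ) < N := i.isLt
  set i' := (i:ℕ)/2 with hi'
  have hg1 : ∀ y, (s.set (i:ℕ) v).get y = if y = (i:ℕ) then v else s.get y := by
    intro y; rw [get_set]
    by_cases h : y = (i:ℕ) <;> simp [h, hiN]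
  rcases hbc : (s.set (i:ℕ) v).chainWith i' with _ | m
  · -- no accidental chain: wstep = single write
    have hws : s.wstep i v = s.set (i:ℕ) v := by
      unfold wstep; rw [← hi', breakChain_of_none hbc]
    rw [hws]
    have hC : ∀ c, (s.set (i:ℕ) v).chainWith c = s.chainWith c := by
      intro c
      by_cases hci : c = i'
      · subst hci; rw [hbc, hch]
      · by_cases hp : s.get (2*c) = (i:ℕ) ∧ (i:ℕ) % 2 = 0
        · -- pointer of c hits position i = 2*i'; both statuses are `none`
          obtain ⟨hp, hpe⟩ := hp
          have h2i : 2*i' = (i:ℕ) := by omega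
          rw [show s.chainWith c = none from ?_]
          · refine chainWith_eq_none_of fun k hk1 hk2 hk3 hk4 hk5 => ?_
            rw [hg1, if_neg (by omega), hp] at hk1
            have hki : k = i' := by omega
            subst hki
            rw [hg1, h2i, if_pos rfl] at hk2
            have hb1 : (s.set (i:ℕ) v).get (2*i') = 2*c := by
              rw [hg1, h2i, if_pos rfl]; exact hk2
            have hb2 : (s.set (i:ℕ) v).get (2*c) = 2*i' := by
              rw [hg1, if_neg (by omega), hp]; omega
            rw [chainWith_eq_some_iff.mpr ⟨hb1, hb2, by simp only [set_b] at hk3 ⊢; omega,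
              hk5, hk4⟩] at hbc
            exact nomatch hbc
          · refine chainWith_eq_none_of fun k hk1 hk2 hk3 hk4 hk5 => ?_
            rw [hp] at hk1
            have hki : k = i' := by omega
            subst hki
            rw [chainWith_eq_some_iff.mpr ⟨hk2, by rw [hp]; omega, by omega, hk5, hk4⟩] at hch
            exact nomatch hch
        · refine chainWith_congr2 rfl (by rw [hg1, if_neg (by omega)]) (fun he => ?_)
          rw [hg1, if_neg (by intro hpi; exact hp ⟨hpi, by omega⟩)]
    exact Zabs_update_of i v rfl rfl hC hlt hch
      (by rw [hg1, if_pos rfl])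
      (fun y hy _ => by rw [hg1, if_neg hy])
      (fun y hy hy2 => by rw [hg1, if_neg (by omega)])
  · -- accidental chain of block i' with m: `i` must be even, `v = 2*m`
    obtain ⟨q1, q2, qside, qr1, qr2⟩ := chainWith_eq_some_iff.mp hbc
    simp only [set_b] at qside
    have hmb : i' < s.b ∧ s.b ≤ m := by omega
    have hieven : (i:ℕ) % 2 = 0 := by
      by_contra hodd
      have h1 : s.get (2*i') = 2*m := by rw [hg1, if_neg (by omega)] at q1; exact q1
      have h2 : s.get (2*m) = 2*i' := by rw [hg1, if_neg (by omega)] at q2; exact q2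
      rw [chainWith_eq_some_iff.mpr ⟨h1, h2, by omega, qr1, qr2⟩] at hch
      exact nomatch hch
    have h2i : 2*i' = (i:ℕ) := by omega
    have hv2m : v = 2*m := by rw [hg1, h2i, if_pos rfl] at q1; exact q1
    have hsm : s.get (2*m) = 2*i' := by rw [hg1, if_neg (by omega)] at q2; exact q2
    have h2mN : 2*m < N := by omega
    have hws : s.wstep i v = (s.set (i:ℕ) v).set (2*m) (2*m) := by
      unfold wstep; rw [← hi', breakChain_of_some hbc]
    have hT : ∀ y, ((s.set (i:ℕ) v).set (2*m) (2*m)).get y =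
        if y = 2*m then 2*m else if y = (i:ℕ) then v else s.get y := by
      intro y; rw [get_set, hg1]
      by_cases h : y = 2*m <;> simp [h, h2mN]
    rw [hws]
    have hC : ∀ c, ((s.set (i:ℕ) v).set (2*m) (2*m)).chainWith c = s.chainWith c := by
      intro c
      by_cases hci : c = i'
      · subst hci
        rw [hch]
        refine chainWith_eq_none_of fun k hk1 hk2 hk3 hk4 hk5 => ?_
        simp only [set_b] at hk3
        rw [hT, if_neg (by omega), h2i, if_pos rfl] at hk1
        rw [hT] at hk2
        have hkm : k = m := by omega
        rw [if_pos (by omega)] at hk2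
        omega
      · by_cases hcm : c = m
        · rw [hcm]
          rw [show s.chainWith m = none from ?_]
          · refine chainWith_eq_none_of fun k hk1 hk2 hk3 hk4 hk5 => ?_
            simp only [set_b] at hk3
            rw [hT, if_pos rfl] at hk1
            omega
          · refine chainWith_eq_none_of fun k hk1 hk2 hk3 hk4 hk5 => ?_
            rw [hsm] at hk1
            have hki : k = i' := by omega
            subst hki
            rw [chainWith_eq_some_iff.mpr ⟨hk2, hsm, by omega, hk5, hk4⟩] at hch
            exact nomatch hch
        · by_cases hp1 : s.get (2*c) = 2*i'
          · rw [show s.chainWith c = none from ?_]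
            · refine chainWith_eq_none_of fun k hk1 hk2 hk3 hk4 hk5 => ?_
              simp only [set_b] at hk3
              rw [hT, if_neg (by omega), if_neg (by omega), hp1] at hk1
              have hki : k = i' := by omega
              subst hki
              rw [hT, if_neg (by omega), h2i, if_pos rfl] at hk2
              omega
            · refine chainWith_eq_none_of fun k hk1 hk2 hk3 hk4 hk5 => ?_
              rw [hp1] at hk1
              have hki : k = i' := by omega
              subst hki
              rw [chainWith_eq_some_iff.mpr ⟨hk2, hp1, by omega, hk5, hk4⟩] at hch
              exact nomatch hch
          · by_cases hp2 : s.get (2*c) = 2*m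
            · rw [show s.chainWith c = none from ?_]
              · refine chainWith_eq_none_of fun k hk1 hk2 hk3 hk4 hk5 => ?_
                simp only [set_b] at hk3
                rw [hT, if_neg (by omega), if_neg (by omega), hp2] at hk1
                have hkm : k = m := by omega
                subst hkm
                rw [hT, if_pos rfl] at hk2
                omega
              · refine chainWith_eq_none_of fun k hk1 hk2 hk3 hk4 hk5 => ?_
                rw [hp2] at hk1
                have hkm : k = m := by omega
                subst hkm
                rw [hsm] at hk2
                omega
            · refine chainWith_congr2 rfl (by rw [hT, if_neg (by omega), if_neg (by omega)])
                (fun he => by rw [hT, if_neg (by omega), if_neg (by omega)])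
    exact Zabs_update_of i v rfl rfl hC hlt hch
      (by rw [hT, if_neg (by omega), if_pos rfl])
      (fun y hy hy2 => by rw [hT, if_neg (by omega), if_neg hy])
      (fun y hy hy2 => by rw [hT, if_neg (by omega), if_neg (by omega)])
lemma chainWith_set_iff {u : IPState N} {p w c d : ℕ} (hc : 2*c ≠ p) (hd : 2*d ≠ p) :
    (u.set p w).chainWith c = some d ↔ u.chainWith c = some d := by
  rw [chainWith_eq_some_iff, chainWith_eq_some_iff]
  rw [get_set, get_set, if_neg (by omega), if_neg (by omega)]
  simp only [set_b]

lemma get_bump {s : IPState N} {n : ℕ} :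
    ∀ y, (({ s with b := n } : IPState N)).get y = s.get y := fun _ => rfl

lemma chainWith_bump_iff {s : IPState N} {c d : ℕ} (hcb : c ≠ s.b) (hdb : d ≠ s.b) :
    (({ s with b := s.b + 1 } : IPState N)).chainWith c = some d ↔
      s.chainWith c = some d := by
  rw [chainWith_eq_some_iff, chainWith_eq_some_iff]
  constructor
  · rintro ⟨h1, h2, h3, h4, h5⟩
    exact ⟨h1, h2, by simp only at h3; omega, h4, h5⟩
  · rintro ⟨h1, h2, h3, h4, h5⟩
    exact ⟨h1, h2, by simp only; omega, h4, h5⟩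

lemma breakChain_spec (u : IPState N) (c : ℕ) (hc : c < u.b) :
    (u.breakChain c).b = u.b ∧ (u.breakChain c).initv = u.initv ∧
    (u.breakChain c).chainWith c = none ∧
    (∀ y, y % 2 = 1 → (u.breakChain c).get y = u.get y) ∧
    (∀ y, y/2 < u.b → (u.breakChain c).get y = u.get y) ∧
    (∀ c' d, c' ≠ c → (u.breakChain c).chainWith c' = some d →
        d ≠ c ∧ u.chainWith c' = some d) ∧
    (∀ c' d, c' ≠ c → d ≠ c → u.chainWith c' = some d →
        (u.breakChain c).chainWith c' = some d) := by
  rcases hbc : u.chainWith c with _ | m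
  · rw [breakChain_of_none hbc]
    refine ⟨rfl, rfl, hbc, fun y _ => rfl, fun y _ => rfl, fun c' d hc' hd => ⟨?_, hd⟩,
      fun c' d _ _ h => h⟩
    rintro rfl
    obtain ⟨h1, h2, h3, h4, h5⟩ := chainWith_eq_some_iff.mp hd
    rw [chainWith_eq_some_iff.mpr ⟨h2, h1, by omega, h5, h4⟩] at hbc
    exact nomatch hbc
  · obtain ⟨p1, p2, pside, pr1, pr2⟩ := chainWith_eq_some_iff.mp hbc
    have hmb : c < u.b ∧ u.b ≤ m := by omega
    have hmc : m ≠ c := by omega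
    have h2mN : 2*m < N := by omega
    rw [breakChain_of_some hbc]
    have hT : ∀ y, (u.set (2*m) (2*m)).get y = if y = 2*m then 2*m else u.get y := by
      intro y; rw [get_set]
      by_cases h : y = 2*m <;> simp [h, h2mN]
    refine ⟨rfl, rfl, ?_, fun y hy => by rw [hT, if_neg (by omega)],
      fun y hy => by rw [hT, if_neg (by omega)], ?_, ?_⟩
    · refine chainWith_eq_none_of fun k hk1 hk2 hk3 hk4 hk5 => ?_
      rw [hT, if_neg (by omega), p1] at hk1
      have hkm : k = m := by omega
      rw [hkm, hT, if_pos rfl] at hk2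
      omega
    · intro c' d hc' ht
      obtain ⟨q1, q2, qside, qr1, qr2⟩ := chainWith_eq_some_iff.mp ht
      simp only [set_b] at qside
      by_cases hcm : c' = m
      · rw [hcm, hT, if_pos rfl] at q1
        exact absurd qside (by omega)
      · rw [hT, if_neg (by omega)] at q1
        by_cases hdm : d = m
        · rw [hdm, hT, if_pos rfl] at q2
          exact (hcm (by omega)).elim
        · by_cases hdc : d = c
          · rw [hdc, hT, if_neg (by omega), p1] at q2
            exact (hcm (by omega)).elim
          · rw [hT, if_neg (by omega)] at q2
            exact ⟨hdc, chainWith_eq_some_iff.mpr ⟨q1, q2, qside, qr1, qr2⟩⟩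
    · intro c' d hc' hd hu
      obtain ⟨q1, q2, qside, qr1, qr2⟩ := chainWith_eq_some_iff.mp hu
      by_cases hcm : c' = m
      · rw [hcm, p2] at q1
        exact (hd (by omega)).elim
      · by_cases hdm : d = m
        · rw [hdm, p2] at q2
          exact (hc' (by omega)).elim
        · refine chainWith_eq_some_iff.mpr ⟨?_, ?_, by simp only [set_b]; exact qside, qr1, qr2⟩
          · rw [hT, if_neg (by omega)]; exact q1
          · rw [hT, if_neg (by omega)]; exact q2
lemma initBlock_get (u : IPState N) (c : ℕ) (hcN : 2*c+1 < N) :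
    ∀ y, (u.initBlock c).get y =
      if y = 2*c then u.initv else if y = 2*c+1 then u.initv else u.get y := by
  intro y
  unfold initBlock
  rw [get_set, get_set]
  by_cases h1 : y = 2*c
  · simp [h1, (by omega : ¬(2*c = 2*c+1)), (by omega : 2*c < N)]
  · by_cases h2 : y = 2*c+1 <;> simp [h1, h2, hcN]

lemma initBlock_b (u : IPState N) (c : ℕ) : (u.initBlock c).b = u.b := rfl
lemma initBlock_initv (u : IPState N) (c : ℕ) : (u.initBlock c).initv = u.initv := rfl

lemma initBreak_spec (u : IPState N) (c : ℕ) (hc : c < u.b) (hcN : 2*c+1 < N) :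
    ((u.initBlock c).breakChain c).b = u.b ∧
    ((u.initBlock c).breakChain c).initv = u.initv ∧
    ((u.initBlock c).breakChain c).chainWith c = none ∧
    ((u.initBlock c).breakChain c).get (2*c) = u.initv ∧
    ((u.initBlock c).breakChain c).get (2*c+1) = u.initv ∧
    (∀ y, y % 2 = 1 → y ≠ 2*c+1 → ((u.initBlock c).breakChain c).get y = u.get y) ∧
    (∀ y, y/2 < u.b → y/2 ≠ c → ((u.initBlock c).breakChain c).get y = u.get y) ∧
    (∀ c' d, c' ≠ c → ((u.initBlock c).breakChain c).chainWith c' = some d →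
        d ≠ c ∧ u.chainWith c' = some d) ∧
    (∀ c' d, c' ≠ c → d ≠ c → u.chainWith c' = some d →
        ((u.initBlock c).breakChain c).chainWith c' = some d) := by
  obtain ⟨g1, g2, g3, g4, g5, g6, g7⟩ :=
    breakChain_spec (u.initBlock c) c (by rw [initBlock_b]; exact hc)
  rw [initBlock_b] at g1 g5
  rw [initBlock_initv] at g2
  have hIB : ∀ c' d, c' ≠ c → d ≠ c →
      ((u.initBlock c).chainWith c' = some d ↔ u.chainWith c' = some d) := by
    intro c' d hc' hd
    unfold initBlock
    rw [chainWith_set_iff (by omega) (by omega), chainWith_set_iff (by omega) (by omega)]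
  refine ⟨g1, g2, g3, ?_, ?_, ?_, ?_, ?_, ?_⟩
  · rw [g5 (2*c) (by omega), initBlock_get u c hcN, if_pos rfl]
  · rw [g4 (2*c+1) (by omega), initBlock_get u c hcN, if_neg (by omega), if_pos rfl]
  · intro y hy1 hy2
    rw [g4 y hy1, initBlock_get u c hcN, if_neg (by omega), if_neg hy2]
  · intro y hy1 hy2
    rw [g5 y hy1, initBlock_get u c hcN, if_neg (by omega), if_neg (by omega)]
  · intro c' d hc' ht
    obtain ⟨hd, hu⟩ := g6 c' d hc' ht
    exact ⟨hd, (hIB c' d hc' hd).mp hu⟩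
  · intro c' d hc' hd hu
    exact g7 c' d hc' hd ((hIB c' d hc' hd).mpr hu)

/-- Interface of the `extend` operation. -/
structure ExtendSpec (s t : IPState N) (j' : ℕ) : Prop where
  hb : t.b = s.b + 1
  hiv : t.initv = s.initv
  hjle : j' ≤ s.b
  hjN : 2*j' + 1 < N
  hg0 : t.get (2*j') = s.initv
  hg1 : t.get (2*j'+1) = s.initv
  hjchain : t.chainWith j' = none
  hget : ∀ y, y/2 < s.b → y/2 ≠ j' → t.get y = s.get y
  hsome : ∀ c d, c ≠ j' → t.chainWith c = some d →
    d ≠ j' ∧ d ≠ s.b ∧ c ≠ s.b ∧ s.chainWith c = some d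
  hto : ∀ c d, c ≠ j' → d ≠ j' → c ≠ s.b → d ≠ s.b →
    s.chainWith c = some d → t.chainWith c = some d
  habs : t.Zabs = s.Zabs
  hcase : (j' = s.b ∧ s.chainWith s.b = none) ∨ s.chainWith s.b = some j'

lemma extend_spec (s : IPState N) (hroom : 2*s.b + 2 ≤ N) :
    ExtendSpec s (s.extend).1 (s.extend).2 := by
  have hbN : 2*s.b + 1 < N := by omega
  rcases hsb : s.chainWith s.b with _ | k
  · -- extend, case: block `b` unchained
    set s1 : IPState N := { s with b := s.b + 1 } with hs1
    have he : s.extend = ((s1.initBlock s.b).breakChain s.b, s.b) := by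
      unfold extend; rw [hsb]
    rw [he]
    dsimp only
    obtain ⟨f1, f2, f3, f4, f5, f6, f7, f8, f9⟩ :=
      initBreak_spec s1 s.b (by simp [hs1]) hbN
    have hs1b : s1.b = s.b + 1 := rfl
    have hs1g : ∀ y, s1.get y = s.get y := fun _ => rfl
    have hs1iv : s1.initv = s.initv := rfl
    rw [hs1b] at f1 f7
    rw [hs1iv] at f2 f4 f5
    -- chain transfer t ↔ s for blocks ≠ s.b
    have hTS : ∀ c d, c ≠ s.b → (((s1.initBlock s.b).breakChain s.b).chainWith c = some d →
        d ≠ s.b ∧ s.chainWith c = some d) := by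
      intro c d hc ht
      obtain ⟨hd, hu⟩ := f8 c d hc ht
      exact ⟨hd, (chainWith_bump_iff hc hd).mp hu⟩
    have hST : ∀ c d, c ≠ s.b → d ≠ s.b → s.chainWith c = some d →
        ((s1.initBlock s.b).breakChain s.b).chainWith c = some d := by
      intro c d hc hd hu
      exact f9 c d hc hd ((chainWith_bump_iff hc hd).mpr hu)
    refine ⟨f1, f2, le_refl _, hbN, f4, f5, f3, ?_, ?_, ?_, ?_, Or.inl ⟨rfl, hsb⟩⟩
    · intro y hy1 hy2
      rw [f7 y (by omega) hy2, hs1g]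
    · intro c d hc ht
      obtain ⟨hd, hu⟩ := hTS c d hc ht
      exact ⟨hd, hd, hc, hu⟩
    · intro c d hc _ _ hd hu
      exact hST c d hc hd hu
    · -- Zabs preserved
      funext x
      by_cases hjb : (x:ℕ)/2 = s.b
      · rw [Zabs_of_none (by rw [hjb]; exact f3), Zabs_of_none (by rw [hjb]; exact hsb)]
        rw [f1, if_pos (by omega), if_neg (by omega)]
        rcases (by omega : (x:ℕ) = 2*s.b ∨ (x:ℕ) = 2*s.b + 1) with h | h
        · rw [h]; exact f4
        · rw [h]; exact f5
      · rcases hxc : s.chainWith ((x:ℕ)/2) with _ | d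
        · have htn : ((s1.initBlock s.b).breakChain s.b).chainWith ((x:ℕ)/2) = none := by
            rcases htc : ((s1.initBlock s.b).breakChain s.b).chainWith ((x:ℕ)/2) with _ | d'
            · rfl
            · obtain ⟨-, hu⟩ := hTS _ _ hjb htc
              rw [hxc] at hu; exact nomatch hu
          rw [Zabs_of_none htn, Zabs_of_none hxc, f1, f2]
          by_cases hlt : (x:ℕ)/2 < s.b
          · rw [if_pos (by omega), if_pos hlt, f7 (x:ℕ) (by omega) hjb, hs1g]
          · rw [if_neg (by omega), if_neg hlt]
        · have hd : d ≠ s.b := by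
            intro h; rw [h] at hxc
            rw [chainWith_symm hxc] at hsb; exact nomatch hsb
          have hts := hST _ _ hjb hd hxc
          rw [Zabs_of_some hts, Zabs_of_some hxc, f1, f2]
          obtain ⟨e1, e2, eside, er1, er2⟩ := chainWith_eq_some_iff.mp hxc
          by_cases hlt : (x:ℕ)/2 < s.b
          · rw [if_pos (by omega), if_pos hlt]
          · rw [if_neg (by omega), if_neg hlt]
            have hdlt : d < s.b := by omega
            split_ifs with hpar
            · rw [f7 (2*d+1) (by omega) (by omega), hs1g]
            · rw [f6 (x:ℕ) (by omega) (by omega), hs1g]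
  · -- extend, case: block `b` chained with `k`
    obtain ⟨p1, p2, pside, pr1, pr2⟩ := chainWith_eq_some_iff.mp hsb
    have hkb : k < s.b := by omega
    set s1 : IPState N := { s with b := s.b + 1 } with hs1
    have he : s.extend =
        (((((s1.set (2*s.b) (s1.get (2*k+1))).breakChain s.b).initBlock k).breakChain k), k) := by
      unfold extend; rw [hsb]
    rw [he]; dsimp only
    have hw' : s1.get (2*k+1) = s.get (2*k+1) := rfl
    rw [hw']
    have hg2 : ∀ y, (s1.set (2*s.b) (s.get (2*k+1))).get y =
        if y = 2*s.b then s.get (2*k+1) else s.get y := by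
      intro y; rw [get_set]
      by_cases h : y = 2*s.b
      · rw [if_pos ⟨h, by omega⟩, if_pos h]
      · rw [if_neg (by tauto), if_neg h]; rfl
    obtain ⟨g1, g2, g3, g4, g5, g6, g7⟩ :=
      breakChain_spec (s1.set (2*s.b) (s.get (2*k+1))) s.b (by simp [hs1])
    set s3 := (s1.set (2*s.b) (s.get (2*k+1))).breakChain s.b with hs3
    have hs2b : (s1.set (2*s.b) (s.get (2*k+1))).b = s.b + 1 := rfl
    have hs2iv : (s1.set (2*s.b) (s.get (2*k+1))).initv = s.initv := rfl
    rw [hs2b] at g1 g5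
    rw [hs2iv] at g2
    obtain ⟨f1, f2, f3, f4, f5, f6, f7, f8, f9⟩ := initBreak_spec s3 k (by rw [g1]; omega) pr2
    rw [g1] at f1 f7
    rw [g2] at f2 f4 f5
    have hks : s.chainWith k = some s.b := chainWith_symm hsb
    have hGET : ∀ y, y/2 < s.b → y/2 ≠ k → ((s3.initBlock k).breakChain k).get y = s.get y := by
      intro y h1 h2
      rw [f7 y (by omega) h2, g5 y (by omega), hg2, if_neg (by omega)]
    have hTS : ∀ c d, c ≠ k → ((s3.initBlock k).breakChain k).chainWith c = some d →
        d ≠ k ∧ d ≠ s.b ∧ c ≠ s.b ∧ s.chainWith c = some d := by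
      intro c d hc ht
      obtain ⟨hdk, hu3⟩ := f8 c d hc ht
      have hcb : c ≠ s.b := by
        rintro rfl; rw [g3] at hu3; exact nomatch hu3
      obtain ⟨hdb, hu2⟩ := g6 c d hcb hu3
      have hu1 := (chainWith_set_iff (by omega) (by omega)).mp hu2
      exact ⟨hdk, hdb, hcb, (chainWith_bump_iff hcb hdb).mp hu1⟩
    have hST : ∀ c d, c ≠ k → d ≠ k → c ≠ s.b → d ≠ s.b → s.chainWith c = some d →
        ((s3.initBlock k).breakChain k).chainWith c = some d := by
      intro c d h1 h2 h3 h4 hu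
      exact f9 c d h1 h2 (g7 c d h3 h4
        ((chainWith_set_iff (by omega) (by omega)).mpr ((chainWith_bump_iff h3 h4).mpr hu)))
    refine ⟨f1, f2, by omega, pr2, f4, f5, f3, hGET, hTS, hST, ?_, Or.inr hsb⟩
    funext x
    by_cases hjk : (x:ℕ)/2 = k
    · rw [Zabs_of_none (by rw [hjk]; exact f3), Zabs_of_some (by rw [hjk]; exact hks)]
      rw [f1, if_pos (by omega), if_pos (by omega)]
      rcases (by omega : (x:ℕ) = 2*k ∨ (x:ℕ) = 2*k+1) with h | h
      · rw [h]; exact f4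
      · rw [h]; exact f5
    · by_cases hjb : (x:ℕ)/2 = s.b
      · have htn : ((s3.initBlock k).breakChain k).chainWith ((x:ℕ)/2) = none := by
          rcases htc : ((s3.initBlock k).breakChain k).chainWith ((x:ℕ)/2) with _ | d'
          · rfl
          · obtain ⟨-, hu3⟩ := f8 _ _ hjk htc
            rw [hjb, g3] at hu3
            exact nomatch hu3
        rw [Zabs_of_none htn, Zabs_of_some (by rw [hjb]; exact hsb)]
        rw [f1, if_pos (by omega), if_neg (by omega)]
        rcases (by omega : (x:ℕ) = 2*s.b ∨ (x:ℕ) = 2*s.b+1) with h | h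
        · rw [h, if_pos (by omega)]
          rw [f7 (2*s.b) (by omega) (by omega), g5 (2*s.b) (by omega), hg2, if_pos rfl]
        · rw [h, if_neg (by omega)]
          rw [f6 (2*s.b+1) (by omega) (by omega), g4 (2*s.b+1) (by omega), hg2,
            if_neg (by omega)]
      · rcases hxc : s.chainWith ((x:ℕ)/2) with _ | d
        · have htn : ((s3.initBlock k).breakChain k).chainWith ((x:ℕ)/2) = none := by
            rcases htc : ((s3.initBlock k).breakChain k).chainWith ((x:ℕ)/2) with _ | d'
            · rfl
            · obtain ⟨-, -, -, hu⟩ := hTS _ _ hjk htc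
              rw [hxc] at hu; exact nomatch hu
          rw [Zabs_of_none htn, Zabs_of_none hxc, f1, f2]
          by_cases hlt : (x:ℕ)/2 < s.b
          · rw [if_pos (by omega), if_pos hlt, hGET (x:ℕ) hlt hjk]
          · rw [if_neg (by omega), if_neg hlt]
        · have hdk : d ≠ k := by
            rintro rfl
            have h2 := chainWith_symm hxc
            rw [hks] at h2
            exact hjb (Option.some.inj h2).symm
          have hdb : d ≠ s.b := by
            rintro rfl
            have h2 := chainWith_symm hxc
            rw [hsb] at h2
            exact hjk (Option.some.inj h2).symm
          have hts := hST _ _ hjk hdk hjb hdb hxc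
          rw [Zabs_of_some hts, Zabs_of_some hxc, f1, f2]
          obtain ⟨e1, e2, eside, er1, er2⟩ := chainWith_eq_some_iff.mp hxc
          by_cases hlt : (x:ℕ)/2 < s.b
          · rw [if_pos (by omega), if_pos hlt]
          · rw [if_neg (by omega), if_neg hlt]
            have hdlt : d < s.b := by omega
            split_ifs with hpar
            · exact hGET (2*d+1) (by omega) (by omega)
            · rw [f6 (x:ℕ) (by omega) (by omega), g4 (x:ℕ) (by omega), hg2,
                if_neg (by omega)]
lemma dstep_correct {t : IPState N} {i : Fin N} {v j' : ℕ}
    (hij : (i:ℕ)/2 ≠ j') (hgei : t.b ≤ (i:ℕ)/2) (hjlt : j' < t.b)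
    (hchI : t.chainWith ((i:ℕ)/2) = none) (hchJ : t.chainWith j' = none)
    (hg0 : t.get (2*j') = t.initv) (hg1 : t.get (2*j'+1) = t.initv)
    (hjN : 2*j'+1 < N) (hiN2 : 2*((i:ℕ)/2)+1 < N) :
    (((t.initBlock ((i:ℕ)/2)).makeChain j' ((i:ℕ)/2)).ustep i v j').Zabs
      = Function.update t.Zabs i v := by
  have hiN : (i:ℕ) < N := i.isLt
  set i' := (i:ℕ)/2 with hi'
  set w : ℕ := if (i:ℕ) % 2 = 0 then 2*j'+1 else (i:ℕ) with hw
  have hwN : w < N := by rw [hw]; split_ifs <;> omega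
  have hts : ((t.initBlock i').makeChain j' i').ustep i v j' =
      ((((t.set (2*i') t.initv).set (2*i'+1) t.initv).set (2*j') (2*i')).set (2*i') (2*j')).set
        w v := by
    unfold ustep makeChain initBlock
    rw [hw]
    split_ifs <;> rfl
  rw [hts]
  set T := ((((t.set (2*i') t.initv).set (2*i'+1) t.initv).set (2*j') (2*i')).set
      (2*i') (2*j')).set w v with hTdef
  have hTb : T.b = t.b := by simp only [hTdef, set_b]
  have hTiv : T.initv = t.initv := by simp only [hTdef, set_initv]
  have hT : ∀ y, T.get y = if y = w then v else if y = 2*i' then 2*j'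
      else if y = 2*j' then 2*i' else if y = 2*i'+1 then t.initv else t.get y := by
    intro y
    rw [hTdef, get_set, get_set, get_set, get_set, get_set]
    by_cases h1 : y = w
    · rw [if_pos ⟨h1, by omega⟩, if_pos h1]
    · rw [if_neg (by tauto), if_neg h1]
      by_cases h2 : y = 2*i'
      · rw [if_pos ⟨h2, by omega⟩, if_pos h2]
      · rw [if_neg (by tauto), if_neg h2]
        by_cases h3 : y = 2*j'
        · rw [if_pos ⟨h3, by omega⟩, if_pos h3]
        · rw [if_neg (by tauto), if_neg h3]
          by_cases h4 : y = 2*i'+1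
          · rw [if_pos ⟨h4, by omega⟩, if_pos h4]
          · rw [if_neg (by tauto), if_neg h4, if_neg (by tauto)]
  have hwodd : w % 2 = 1 := by rw [hw]; split_ifs with h <;> omega
  have hCi : T.chainWith i' = some j' := by
    refine chainWith_eq_some_iff.mpr ⟨?_, ?_, ?_, hiN2, hjN⟩
    · rw [hT, if_neg (by omega), if_pos rfl]
    · rw [hT, if_neg (by omega), if_neg (by omega), if_pos rfl]
    · rw [hTb]; omega
  have hCj : T.chainWith j' = some i' := chainWith_symm hCi
  have hCother : ∀ c, c ≠ i' → c ≠ j' → T.chainWith c = t.chainWith c := by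
    intro c hci hcj
    by_cases hp1 : t.get (2*c) = 2*i'
    · rw [show t.chainWith c = none from ?_]
      · refine chainWith_eq_none_of fun k hk1 hk2 hk3 hk4 hk5 => ?_
        rw [hT, if_neg (by omega), if_neg (by omega), if_neg (by omega),
          if_neg (by omega), hp1] at hk1
        have hki : k = i' := by omega
        rw [hki, hT, if_neg (by omega), if_pos rfl] at hk2
        omega
      · refine chainWith_eq_none_of fun k hk1 hk2 hk3 hk4 hk5 => ?_
        rw [hp1] at hk1
        have hki : k = i' := by omega
        rw [hki] at hk2
        rw [chainWith_eq_some_iff.mpr ⟨hk2, hp1, by omega, by omega, by omega⟩] at hchI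
        exact nomatch hchI
    · by_cases hp2 : t.get (2*c) = 2*j'
      · rw [show t.chainWith c = none from ?_]
        · refine chainWith_eq_none_of fun k hk1 hk2 hk3 hk4 hk5 => ?_
          rw [hT, if_neg (by omega), if_neg (by omega), if_neg (by omega),
            if_neg (by omega), hp2] at hk1
          have hkj : k = j' := by omega
          rw [hkj, hT, if_neg (by omega), if_neg (by omega), if_pos rfl] at hk2
          omega
        · refine chainWith_eq_none_of fun k hk1 hk2 hk3 hk4 hk5 => ?_
          rw [hp2] at hk1
          have hkj : k = j' := by omega
          rw [hkj] at hk2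
          rw [chainWith_eq_some_iff.mpr ⟨hk2, hp2, by omega, by omega, by omega⟩] at hchJ
          exact nomatch hchJ
      · refine chainWith_congr2 hTb ?_ (fun he => ?_)
        · rw [hT, if_neg (by omega), if_neg (by omega), if_neg (by omega), if_neg (by omega)]
        · rw [hT, if_neg (by omega), if_neg hp1, if_neg hp2, if_neg (by omega)]
  funext x
  rw [Function.update_apply]
  by_cases hxi : x = i
  · subst hxi
    rw [if_pos rfl, Zabs_of_some hCi, hTb, if_neg (by omega)]
    split_ifs with hpar
    · rw [hT, if_pos (by rw [hw, if_pos hpar])]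
    · rw [hT, if_pos (by rw [hw, if_neg hpar])]
  · rw [if_neg hxi]
    have hxi' : (x:ℕ) ≠ (i:ℕ) := fun h => hxi (Fin.ext h)
    by_cases hji : (x:ℕ)/2 = i'
    · -- sibling position of i in block i'
      rw [Zabs_of_some (by rw [hji]; exact hCi), Zabs_of_none (by rw [hji]; exact hchI),
        hTb, hTiv, if_neg (show ¬((x:ℕ)/2 < t.b) by omega),
        if_neg (show ¬((x:ℕ)/2 < t.b) by omega)]
      split_ifs with hpar
      · -- x even, so x = 2*i' and i = 2*i'+1 is odd
        have hxe : (x:ℕ) = 2*i' := by omega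
        have hio : (i:ℕ) % 2 = 1 := by omega
        rw [hT, if_neg (by rw [hw, if_neg (by omega)]; omega), if_neg (by omega),
          if_neg (by omega), if_neg (by omega)]
        exact hg1
      · -- x odd, so x = 2*i'+1 and i = 2*i' is even
        have hxe : (x:ℕ) = 2*i'+1 := by omega
        have hie : (i:ℕ) % 2 = 0 := by omega
        rw [hxe, hT, if_neg (by rw [hw, if_pos hie]; omega), if_neg (by omega),
          if_neg (by omega), if_pos rfl]
    · by_cases hjj : (x:ℕ)/2 = j'
      · rw [Zabs_of_some (by rw [hjj]; exact hCj), Zabs_of_none (by rw [hjj]; exact hchJ),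
          hTb, hTiv, if_pos (by omega), if_pos (by omega)]
        rcases (by omega : (x:ℕ) = 2*j' ∨ (x:ℕ) = 2*j'+1) with h | h
        · rw [h]; exact hg0.symm
        · rw [h]; exact hg1.symm
      · rcases hxc : t.chainWith ((x:ℕ)/2) with _ | d
        · rw [Zabs_of_none (by rw [hCother _ hji hjj]; exact hxc), Zabs_of_none hxc, hTb, hTiv]
          split_ifs with hlt
          · rw [hT, if_neg (by rw [hw]; split_ifs <;> omega), if_neg (by omega),
              if_neg (by omega), if_neg (by omega)]
          · rfl
        · obtain ⟨e1, e2, eside, er1, er2⟩ := chainWith_eq_some_iff.mp hxc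
          rw [Zabs_of_some (by rw [hCother _ hji hjj]; exact hxc), Zabs_of_some hxc, hTb, hTiv]
          split_ifs with hlt hpar
          · rfl
          · -- x even, unwritten: read partner's odd slot
            have hdi : d ≠ i' := by
              rintro rfl
              have h2 := chainWith_symm hxc
              rw [hchI] at h2; exact nomatch h2
            have hdj : d ≠ j' := by
              rintro rfl
              have h2 := chainWith_symm hxc
              rw [hchJ] at h2; exact nomatch h2
            rw [hT, if_neg (by rw [hw]; split_ifs <;> omega), if_neg (by omega),
              if_neg (by omega), if_neg (by omega)]
          · rw [hT, if_neg (by rw [hw]; split_ifs <;> omega), if_neg (by omega),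
              if_neg (by omega), if_neg (by omega)]
lemma bstep_core {t T : IPState N} {i : Fin N} {v j' k0 m : ℕ}
    (hij : (i:ℕ)/2 ≠ j') (hilt : (i:ℕ)/2 < t.b) (hjlt : j' < t.b)
    (hchI : t.chainWith ((i:ℕ)/2) = some k0) (hchJ : t.chainWith j' = none)
    (hg0 : t.get (2*j') = t.initv) (hg1 : t.get (2*j'+1) = t.initv)
    (hjN : 2*j'+1 < N)
    (hTb : T.b = t.b) (hTiv : T.initv = t.initv)
    (hm : m = (i:ℕ)/2 ∨ (t.b ≤ m ∧ m ≠ k0 ∧ t.get (2*m) = 2*((i:ℕ)/2)))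
    (hT : ∀ y, T.get y =
      if y = (i:ℕ) then v
      else if y = 2*((i:ℕ)/2)+1 then t.initv
      else if y = 2*((i:ℕ)/2) then t.initv
      else if y = 2*m then 2*m
      else if y = 2*k0 then 2*j'
      else if y = 2*j' then 2*k0
      else if y = 2*j'+1 then t.get (2*((i:ℕ)/2)+1)
      else t.get y)
    (hCI : T.chainWith ((i:ℕ)/2) = none) :
    T.Zabs = Function.update t.Zabs i v := by
  have hiN : (i:ℕ) < N := i.isLt
  set i' := (i:ℕ)/2 with hi'
  obtain ⟨e1, e2, eside, er1, er2⟩ := chainWith_eq_some_iff.mp hchI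
  have hk0 : i' < t.b ∧ t.b ≤ k0 := by omega
  have hkj : k0 ≠ j' := by omega
  have hCj : T.chainWith j' = some k0 := by
    refine chainWith_eq_some_iff.mpr ⟨?_, ?_, by omega, hjN, er2⟩
    · rw [hT, if_neg (by omega), if_neg (by omega), if_neg (by omega),
        if_neg (by omega), if_neg (by omega), if_pos rfl]
    · rw [hT, if_neg (by omega), if_neg (by omega), if_neg (by omega),
        if_neg (by omega), if_pos rfl]
  have hCk : T.chainWith k0 = some j' := chainWith_symm hCj
  have htm : m ≠ i' → t.chainWith m = none := by
    intro hmi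
    refine chainWith_eq_none_of fun k hk1 hk2 hk3 hk4 hk5 => ?_
    have hm' := hm.resolve_left hmi
    rw [hm'.2.2] at hk1
    have hki : k = i' := by omega
    rw [hki, e1] at hk2
    omega
  have hTm : m ≠ i' → T.chainWith m = none := by
    intro hmi
    refine chainWith_eq_none_of fun k hk1 hk2 hk3 hk4 hk5 => ?_
    have hm' := hm.resolve_left hmi
    rw [hT, if_neg (by omega), if_neg (by omega), if_neg (by omega), if_pos rfl] at hk1
    simp only [hTb] at hk3
    omega
  have hCother : ∀ c, c ≠ i' → c ≠ j' → c ≠ k0 → c ≠ m → T.chainWith c = t.chainWith c := by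
    intro c hci hcj hck hcm
    by_cases hp1 : t.get (2*c) = 2*i'
    · rw [show t.chainWith c = none from ?_]
      · refine chainWith_eq_none_of fun k hk1 hk2 hk3 hk4 hk5 => ?_
        rw [hT, if_neg (by omega), if_neg (by omega), if_neg (by omega), if_neg (by omega),
          if_neg (by omega), if_neg (by omega), if_neg (by omega), hp1] at hk1
        have hki : k = i' := by omega
        rw [hki] at hk2 hk3
        simp only [hTb] at hk3
        have hb2 : T.get (2*c) = 2*i' := by
          rw [hT, if_neg (by omega), if_neg (by omega), if_neg (by omega), if_neg (by omega),
            if_neg (by omega), if_neg (by omega), if_neg (by omega), hp1]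
        rw [chainWith_eq_some_iff.mpr ⟨hk2, hb2, by omega, by omega, by omega⟩] at hCI
        exact nomatch hCI
      · refine chainWith_eq_none_of fun k hk1 hk2 hk3 hk4 hk5 => ?_
        rw [hp1] at hk1
        have hki : k = i' := by omega
        rw [hki, e1] at hk2
        omega
    · by_cases hp2 : t.get (2*c) = 2*j'
      · rw [show t.chainWith c = none from ?_]
        · refine chainWith_eq_none_of fun k hk1 hk2 hk3 hk4 hk5 => ?_
          rw [hT, if_neg (by omega), if_neg (by omega), if_neg (by omega), if_neg (by omega),
            if_neg (by omega), if_neg (by omega), if_neg (by omega), hp2] at hk1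
          have hkj' : k = j' := by omega
          rw [hkj', hT, if_neg (by omega), if_neg (by omega), if_neg (by omega),
            if_neg (by omega), if_neg (by omega), if_pos rfl] at hk2
          omega
        · refine chainWith_eq_none_of fun k hk1 hk2 hk3 hk4 hk5 => ?_
          rw [hp2] at hk1
          have hkj' : k = j' := by omega
          rw [hkj'] at hk2
          rw [chainWith_eq_some_iff.mpr ⟨hk2, hp2, by omega, by omega, by omega⟩] at hchJ
          exact nomatch hchJ
      · by_cases hp3 : t.get (2*c) = 2*k0
        · rw [show t.chainWith c = none from ?_]
          · refine chainWith_eq_none_of fun k hk1 hk2 hk3 hk4 hk5 => ?_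
            rw [hT, if_neg (by omega), if_neg (by omega), if_neg (by omega), if_neg (by omega),
              if_neg (by omega), if_neg (by omega), if_neg (by omega), hp3] at hk1
            have hkk : k = k0 := by omega
            rw [hkk, hT, if_neg (by omega), if_neg (by omega), if_neg (by omega),
              if_neg (by omega), if_pos rfl] at hk2
            omega
          · refine chainWith_eq_none_of fun k hk1 hk2 hk3 hk4 hk5 => ?_
            rw [hp3] at hk1
            have hkk : k = k0 := by omega
            rw [hkk, e2] at hk2
            omega
        · by_cases hp4 : t.get (2*c) = 2*m
          · have hmi : m ≠ i' := by omega
            have hm' := hm.resolve_left hmi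
            rw [show t.chainWith c = none from ?_]
            · refine chainWith_eq_none_of fun k hk1 hk2 hk3 hk4 hk5 => ?_
              rw [hT, if_neg (by omega), if_neg (by omega), if_neg (by omega),
                if_neg (by omega), if_neg (by omega), if_neg (by omega), if_neg (by omega),
                hp4] at hk1
              have hkm : k = m := by omega
              rw [hkm, hT, if_neg (by omega), if_neg (by omega), if_neg (by omega),
                if_pos rfl] at hk2
              omega
            · refine chainWith_eq_none_of fun k hk1 hk2 hk3 hk4 hk5 => ?_
              rw [hp4] at hk1
              have hkm : k = m := by omega
              rw [hkm, hm'.2.2] at hk2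
              omega
          · refine chainWith_congr2 hTb ?_ (fun he => ?_)
            · rw [hT, if_neg (by omega), if_neg (by omega), if_neg (by omega),
                if_neg (by omega), if_neg (by omega), if_neg (by omega), if_neg (by omega)]
            · rw [hT, if_neg (by omega), if_neg (by omega), if_neg hp1,
                if_neg hp4, if_neg hp3, if_neg hp2, if_neg (by omega)]
  funext x
  rw [Function.update_apply]
  by_cases hxi : x = i
  · subst hxi
    rw [if_pos rfl, Zabs_of_none hCI, hTb, if_pos (by omega), hT, if_pos rfl]
  · rw [if_neg hxi]
    have hxi' : (x:ℕ) ≠ (i:ℕ) := fun h => hxi (Fin.ext h)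
    by_cases hji : (x:ℕ)/2 = i'
    · rw [Zabs_of_none (by rw [hji]; exact hCI), Zabs_of_some (by rw [hji]; exact hchI),
        hTb, hTiv, if_pos (show (x:ℕ)/2 < t.b by omega), if_pos (show (x:ℕ)/2 < t.b by omega)]
      rcases (by omega : (x:ℕ) = 2*i' ∨ (x:ℕ) = 2*i'+1) with h | h
      · rw [h, hT, if_neg (by omega), if_neg (by omega), if_pos rfl]
      · rw [h, hT, if_neg (by omega), if_pos rfl]
    · by_cases hjj : (x:ℕ)/2 = j'
      · rw [Zabs_of_some (by rw [hjj]; exact hCj), Zabs_of_none (by rw [hjj]; exact hchJ),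
          hTb, hTiv, if_pos (show (x:ℕ)/2 < t.b by omega),
          if_pos (show (x:ℕ)/2 < t.b by omega)]
        rcases (by omega : (x:ℕ) = 2*j' ∨ (x:ℕ) = 2*j'+1) with h | h
        · rw [h]; exact hg0.symm
        · rw [h]; exact hg1.symm
      · by_cases hjk : (x:ℕ)/2 = k0
        · rw [Zabs_of_some (by rw [hjk]; exact hCk), Zabs_of_some
            (by rw [hjk]; exact chainWith_symm hchI), hTb, hTiv,
            if_neg (show ¬((x:ℕ)/2 < t.b) by omega), if_neg (show ¬((x:ℕ)/2 < t.b) by omega)]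
          split_ifs with hpar
          · rw [hT, if_neg (by omega), if_neg (by omega), if_neg (by omega),
              if_neg (by omega), if_neg (by omega), if_neg (by omega), if_pos rfl]
          · have hxe : (x:ℕ) = 2*k0+1 := by omega
            rw [hxe, hT, if_neg (by omega), if_neg (by omega), if_neg (by omega),
              if_neg (by omega), if_neg (by omega), if_neg (by omega), if_neg (by omega)]
        · by_cases hjm : (x:ℕ)/2 = m
          · have hmi : m ≠ i' := by omega
            have hm' := hm.resolve_left hmi
            rw [Zabs_of_none (by rw [hjm]; exact hTm hmi),
              Zabs_of_none (by rw [hjm]; exact htm hmi), hTb, hTiv,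
              if_neg (show ¬((x:ℕ)/2 < t.b) by omega),
              if_neg (show ¬((x:ℕ)/2 < t.b) by omega)]
          · rcases hxc : t.chainWith ((x:ℕ)/2) with _ | d
            · rw [Zabs_of_none (by rw [hCother _ hji hjj hjk hjm]; exact hxc),
                Zabs_of_none hxc, hTb, hTiv]
              split_ifs with hlt
              · rw [hT, if_neg (by omega), if_neg (by omega), if_neg (by omega),
                  if_neg (by omega), if_neg (by omega), if_neg (by omega), if_neg (by omega)]
              · rfl
            · obtain ⟨q1, q2, qside, qr1, qr2⟩ := chainWith_eq_some_iff.mp hxc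
              rw [Zabs_of_some (by rw [hCother _ hji hjj hjk hjm]; exact hxc),
                Zabs_of_some hxc, hTb, hTiv]
              split_ifs with hlt hpar
              · rfl
              · have hdi : d ≠ i' := by
                  rintro rfl
                  have h2 := chainWith_symm hxc
                  rw [hchI] at h2
                  exact hjk (by omega : (x:ℕ)/2 = k0) |>.elim
                have hdj : d ≠ j' := by
                  rintro rfl
                  have h2 := chainWith_symm hxc
                  rw [hchJ] at h2; exact nomatch h2
                rw [hT, if_neg (by omega), if_neg (by omega), if_neg (by omega),
                  if_neg (by omega), if_neg (by omega), if_neg (by omega), if_neg (by omega)]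
              · rw [hT, if_neg (by omega), if_neg (by omega), if_neg (by omega),
                  if_neg (by omega), if_neg (by omega), if_neg (by omega), if_neg (by omega)]
lemma bstep_correct {t : IPState N} {i : Fin N} {v j' k0 : ℕ}
    (hij : (i:ℕ)/2 ≠ j') (hilt : (i:ℕ)/2 < t.b) (hjlt : j' < t.b)
    (hchI : t.chainWith ((i:ℕ)/2) = some k0) (hchJ : t.chainWith j' = none)
    (hg0 : t.get (2*j') = t.initv) (hg1 : t.get (2*j'+1) = t.initv)
    (hjN : 2*j'+1 < N) :
    (((((t.set (2*j') (t.get (2*((i:ℕ)/2)))).set (2*j'+1)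
          (t.get (2*((i:ℕ)/2)+1))).makeChain j' k0).initBlock ((i:ℕ)/2)).wstep i v).Zabs
      = Function.update t.Zabs i v := by
  have hiN : (i:ℕ) < N := i.isLt
  obtain ⟨e1, e2, eside, er1, er2⟩ := chainWith_eq_some_iff.mp hchI
  have hk0 : (i:ℕ)/2 < t.b ∧ t.b ≤ k0 := by omega
  set i' := (i:ℕ)/2 with hi'
  set U : IPState N :=
    ((((((t.set (2*j') (t.get (2*i'))).set (2*j'+1) (t.get (2*i'+1))).set (2*j') (2*k0)).set
      (2*k0) (2*j')).set (2*i')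
        (((((t.set (2*j') (t.get (2*i'))).set (2*j'+1) (t.get (2*i'+1))).set (2*j') (2*k0)).set
          (2*k0) (2*j')).initv)).set (2*i'+1)
        (((((t.set (2*j') (t.get (2*i'))).set (2*j'+1) (t.get (2*i'+1))).set (2*j') (2*k0)).set
          (2*k0) (2*j')).initv)).set (i:ℕ) v with hUdef
  have hws : (((((t.set (2*j') (t.get (2*i'))).set (2*j'+1)
        (t.get (2*i'+1))).makeChain j' k0).initBlock i').wstep i v)
      = U.breakChain i' := by
    rw [hi']
    rfl
  rw [hws]
  have hUb : U.b = t.b := by simp only [hUdef, set_b]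
  have hUiv : U.initv = t.initv := by simp only [hUdef, set_initv]
  have hU : ∀ y, U.get y =
      if y = (i:ℕ) then v
      else if y = 2*i'+1 then t.initv
      else if y = 2*i' then t.initv
      else if y = 2*k0 then 2*j'
      else if y = 2*j' then 2*k0
      else if y = 2*j'+1 then t.get (2*i'+1)
      else t.get y := by
    intro y
    rw [hUdef, get_set, get_set, get_set, get_set, get_set, get_set, get_set]
    simp only [set_initv]
    by_cases h1 : y = (i:ℕ)
    · rw [if_pos ⟨h1, by omega⟩, if_pos h1]
    · rw [if_neg (by tauto), if_neg h1]
      by_cases h2 : y = 2*i'+1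
      · rw [if_pos ⟨h2, by omega⟩, if_pos h2]
      · rw [if_neg (by tauto), if_neg h2]
        by_cases h3 : y = 2*i'
        · rw [if_pos ⟨h3, by omega⟩, if_pos h3]
        · rw [if_neg (by tauto), if_neg h3]
          by_cases h4 : y = 2*k0
          · rw [if_pos ⟨h4, by omega⟩, if_pos h4]
          · rw [if_neg (by tauto), if_neg h4]
            by_cases h5 : y = 2*j'
            · rw [if_pos ⟨h5, by omega⟩, if_pos h5]
            · rw [if_neg (by tauto), if_neg h5]
              by_cases h6 : y = 2*j'+1
              · rw [if_pos ⟨h6, by omega⟩, if_pos h6]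
              · rw [if_neg (by tauto), if_neg h6, if_neg (by tauto)]
  rcases hbc : U.chainWith i' with _ | m
  · rw [breakChain_of_none hbc]
    refine bstep_core hij hilt hjlt hchI hchJ hg0 hg1 hjN hUb hUiv (Or.inl rfl) ?_ hbc
    intro y
    simp only [← hi']
    rw [hU]
    split_ifs <;> omega
  · obtain ⟨q1, q2, qside, qr1, qr2⟩ := chainWith_eq_some_iff.mp hbc
    rw [hUb] at qside
    have hmb : i' < t.b ∧ t.b ≤ m := by omega
    have hmk : m ≠ k0 := by
      intro h
      rw [hU, if_neg (by omega), if_neg (by omega), if_neg (by omega), h,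
        if_pos rfl] at q2
      omega
    have htm : t.get (2*m) = 2*i' := by
      rw [hU, if_neg (by omega), if_neg (by omega), if_neg (by omega), if_neg (by omega),
        if_neg (by omega), if_neg (by omega)] at q2
      exact q2
    rw [breakChain_of_some hbc]
    have hTb : (U.set (2*m) (2*m)).b = t.b := by simp only [set_b]; exact hUb
    have hTiv : (U.set (2*m) (2*m)).initv = t.initv := by simp only [set_initv]; exact hUiv
    refine bstep_core hij hilt hjlt hchI hchJ hg0 hg1 hjN hTb hTiv
      (Or.inr ⟨by omega, hmk, htm⟩) ?_ ?_
    · intro y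
      simp only [← hi']
      rw [get_set]
      by_cases h : y = 2*m
      · rw [if_pos ⟨h, by omega⟩, h, if_neg (by omega), if_neg (by omega),
          if_neg (by omega), if_pos rfl]
      · rw [if_neg (by tauto), hU]
        split_ifs <;> omega
    · refine chainWith_eq_none_of fun k hk1 hk2 hk3 hk4 hk5 => ?_
      rw [get_set, if_neg (by omega), q1] at hk1
      have hkm : k = m := by omega
      rw [hkm, get_set, if_pos ⟨rfl, by omega⟩] at hk2
      omega
lemma WF_set {s : IPState N} {ℓ x v : ℕ} (hs : s.WF ℓ) (hv : v < 2^ℓ) : (s.set x v).WF ℓ := by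
  obtain ⟨h1, h2, h3⟩ := hs
  refine ⟨fun y => ?_, h2, h3⟩
  simp only [set]
  split_ifs
  · exact hv
  · exact h1 y

lemma WF_breakChain {s : IPState N} {ℓ c : ℕ} (hs : s.WF ℓ) (hN2 : N ≤ 2^ℓ) :
    (s.breakChain c).WF ℓ := by
  rcases h : s.chainWith c with _ | k
  · rw [breakChain_of_none h]; exact hs
  · rw [breakChain_of_some h]
    obtain ⟨-, -, -, -, h5⟩ := chainWith_eq_some_iff.mp h
    exact WF_set hs (by omega)

lemma WF_initBlock {s : IPState N} {ℓ c : ℕ} (hs : s.WF ℓ) : (s.initBlock c).WF ℓ := by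
  have h2 := hs.2.1
  exact WF_set (WF_set hs h2) h2

lemma WF_makeChain {s : IPState N} {ℓ a b : ℕ} (hs : s.WF ℓ) (ha : 2*a < 2^ℓ)
    (hb : 2*b < 2^ℓ) : (s.makeChain a b).WF ℓ :=
  WF_set (WF_set hs hb) ha

lemma WF_wstep {s : IPState N} {ℓ v : ℕ} {i : Fin N} (hs : s.WF ℓ) (hv : v < 2^ℓ)
    (hN2 : N ≤ 2^ℓ) : (s.wstep i v).WF ℓ :=
  WF_breakChain (WF_set hs hv) hN2

lemma WF_ustep {s : IPState N} {ℓ v k : ℕ} {i : Fin N} (hs : s.WF ℓ) (hv : v < 2^ℓ) :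
    (s.ustep i v k).WF ℓ := by
  unfold ustep
  split_ifs <;> exact WF_set hs hv

lemma WF_extend {s : IPState N} {ℓ : ℕ} (hs : s.WF ℓ) (hN2 : N ≤ 2^ℓ)
    (hroom : 2*s.b + 2 ≤ N) : (s.extend).1.WF ℓ := by
  have hbump : (({ s with b := s.b + 1 } : IPState N)).WF ℓ := ⟨hs.1, hs.2.1, show 2*(s.b+1) ≤ N by omega⟩
  rcases h : s.chainWith s.b with _ | k
  · have he : s.extend = ((({ s with b := s.b + 1 } : IPState N).initBlock s.b).breakChain
        s.b, s.b) := by unfold extend; rw [h]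
    rw [he]
    exact WF_breakChain (WF_initBlock hbump) hN2
  · have he : s.extend = ((((({ s with b := s.b + 1 } : IPState N).set (2*s.b)
        (({ s with b := s.b + 1 } : IPState N).get (2*k+1))).breakChain s.b).initBlock
          k).breakChain k, k) := by unfold extend; rw [h]
    rw [he]
    exact WF_breakChain (WF_initBlock (WF_breakChain
      (WF_set hbump (get_lt hbump.1 _)) hN2)) hN2
end IPState

open IPState in
/-- Invariant maintenance for the in-place algorithm using `2ℓ` extra bits: for every
well-formed state, the write operation of Algorithm 3 yields a well-formed state and
implements writing one element of the abstract array. -/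
theorem inplace_iwrite_correct (N ℓ : ℕ) (hNeven : N % 2 = 0) (hN : 2 ≤ N)
    (hℓ : Nat.clog 2 N ≤ ℓ) (s : IPState N) (hs : s.WF ℓ)
    (i : Fin N) (v : ℕ) (hv : v < 2 ^ ℓ) :
    (s.iwrite i v).WF ℓ ∧ (s.iwrite i v).Zabs = Function.update s.Zabs i v := by
  have hsWF := hs
  have hN2 : N ≤ 2 ^ ℓ := (Nat.clog_le_iff_le_pow (by norm_num)).mp hℓ
  have hiN : (i:ℕ) < N := i.isLt
  by_cases hlt : (i:ℕ)/2 < s.b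
  · rcases hc : s.chainWith ((i:ℕ)/2) with _ | k
    · have hred : s.iwrite i v = s.wstep i v := by
        unfold iwrite; dsimp only; rw [if_pos hlt, hc]
      rw [hred]
      exact ⟨WF_wstep hsWF hv hN2, wstep_correct hc hlt⟩
    · have hroom : 2*s.b + 2 ≤ N := by
        obtain ⟨-, -, es, -, r2⟩ := chainWith_eq_some_iff.mp hc
        omega
      obtain ⟨Eb, Eiv, Ejle, EjN, Eg0, Eg1, Ejch, Eget, Esome, Eto, Eabs, Ecase⟩ :=
        extend_spec s hroom
      have hWFt : (s.extend).1.WF ℓ := WF_extend hsWF hN2 hroom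
      by_cases hji : (s.extend).2 = (i:ℕ)/2
      · have hred : s.iwrite i v = (s.extend).1.wstep i v := by
          unfold iwrite; dsimp only; rw [if_pos hlt, hc]; dsimp only; rw [if_pos hji]
        rw [hred]
        refine ⟨WF_wstep hWFt hv hN2, ?_⟩
        rw [wstep_correct (by rw [← hji]; exact Ejch) (by rw [← hji, Eb]; omega), Eabs]
      · have hknb : k ≠ s.b := by
          rintro rfl
          have h2 := chainWith_symm hc
          rcases Ecase with ⟨h3, h4⟩ | h4
          · rw [h2] at h4; exact nomatch h4
          · rw [h2] at h4; exact hji (Option.some.inj h4).symm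
        have hkj : k ≠ (s.extend).2 := by
          intro h
          rcases Ecase with ⟨h3, h4⟩ | h4
          · exact hknb (h.trans h3)
          · have h5 := chainWith_symm h4
            have h6 := chainWith_symm hc
            rw [h, h5] at h6
            have := Option.some.inj h6
            omega
        have htch : (s.extend).1.chainWith ((i:ℕ)/2) = some k :=
          Eto _ _ (fun h => hji h.symm) hkj (by omega) hknb hc
        have hred : s.iwrite i v = (((((s.extend).1.set (2*(s.extend).2)
            ((s.extend).1.get (2*((i:ℕ)/2)))).set (2*(s.extend).2+1)
            ((s.extend).1.get (2*((i:ℕ)/2)+1))).makeChain (s.extend).2 k).initBlock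
            ((i:ℕ)/2)).wstep i v := by
          unfold iwrite; dsimp only; rw [if_pos hlt, hc]; dsimp only; rw [if_neg hji]
        rw [hred]
        constructor
        · refine WF_wstep (WF_initBlock (WF_makeChain (WF_set (WF_set hWFt
            (get_lt hWFt.1 _)) (get_lt hWFt.1 _)) (by omega) ?_)) hv hN2
          obtain ⟨-, -, -, -, r2⟩ := chainWith_eq_some_iff.mp hc
          omega
        · rw [bstep_correct (fun h => hji h.symm) (by rw [Eb]; omega) (by rw [Eb]; omega)
            htch Ejch (by rw [Eg0, Eiv]) (by rw [Eg1, Eiv]) EjN, Eabs]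
  · rcases hc : s.chainWith ((i:ℕ)/2) with _ | k
    · -- unwritten, unchained: extend and chain
      have hroom : 2*s.b + 2 ≤ N := by omega
      obtain ⟨Eb, Eiv, Ejle, EjN, Eg0, Eg1, Ejch, Eget, Esome, Eto, Eabs, Ecase⟩ :=
        extend_spec s hroom
      have hWFt : (s.extend).1.WF ℓ := WF_extend hsWF hN2 hroom
      by_cases hki : (s.extend).2 = (i:ℕ)/2
      · have hred : s.iwrite i v = (s.extend).1.wstep i v := by
          unfold iwrite; dsimp only; rw [if_neg hlt, hc]; dsimp only; rw [if_pos hki]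
        rw [hred]
        refine ⟨WF_wstep hWFt hv hN2, ?_⟩
        rw [wstep_correct (by rw [← hki]; exact Ejch) (by rw [← hki, Eb]; omega), Eabs]
      · have hib : (i:ℕ)/2 ≠ s.b := by
          intro h
          rcases Ecase with ⟨h3, h4⟩ | h4
          · exact hki (h3.trans h.symm)
          · rw [← h, hc] at h4; exact nomatch h4
        have hchIt : (s.extend).1.chainWith ((i:ℕ)/2) = none := by
          rcases htc : (s.extend).1.chainWith ((i:ℕ)/2) with _ | d
          · rfl
          · obtain ⟨-, -, -, h4⟩ := Esome _ _ (fun h => hki h.symm) htc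
            rw [hc] at h4; exact nomatch h4
        have hred : s.iwrite i v = (((s.extend).1.initBlock ((i:ℕ)/2)).makeChain
            (s.extend).2 ((i:ℕ)/2)).ustep i v (s.extend).2 := by
          unfold iwrite; dsimp only; rw [if_neg hlt, hc]; dsimp only; rw [if_neg hki]
        rw [hred]
        constructor
        · exact WF_ustep (WF_makeChain (WF_initBlock hWFt) (by omega) (by omega)) hv
        · rw [dstep_correct (fun h => hki h.symm) (by rw [Eb]; omega) (by rw [Eb]; omega)
            hchIt Ejch (by rw [Eg0, Eiv]) (by rw [Eg1, Eiv]) EjN (by omega), Eabs]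
    · have hred : s.iwrite i v = s.ustep i v k := by
        unfold iwrite; dsimp only; rw [if_neg hlt, hc]
      rw [hred]
      exact ⟨WF_ustep hsWF hv, ustep_correct hc (by omega)⟩
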